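/- Let g be the 4-dimensional solvable real Lie algebra with basis e_1,…,e_4 and nonzero brackets [e_2,e_3] = −e_3 and [e_2,e_4] = e_4, and for t ∈ ℝ let K_t be +id on g⁺_t := span(e_2, e_3) and −id on g⁻_t := span(e_1, e_4 + t e_2). Then dim H^2(g;ℝ) = 2 (with basis the classes [e^1∧e^2] and [e^3∧e^4]), and: dim H^{2+}_{K_0}(g;ℝ) = 0, dim H^{2−}_{K_0}(g;ℝ) = 2, while for every t ≠ 0, dim H^{2+}_{K_t}(g;ℝ) = 1 and dim H^{2−}_{K_t}(g;ℝ) = 1. In particular t ↦ dim H^{2+}_{K_t} is lower-semi-continuous and t ↦ dim H^{2−}_{K_t} is upper-semi-continuous along this curve. -/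

import Mathlib

open scoped BigOperators

noncomputable section ChevalleyEilenberg

variable (g : Type*) [LieRing g] [LieAlgebra ℝ g]

/-- The Chevalley–Eilenberg differential of an alternating `k`-form on a real Lie
algebra, as a function on `(k+1)`-tuples:
`(dα)(x_0,…,x_k) = Σ_{i<j} (−1)^{i+j} α([x_i,x_j], x_0,…,x̂_i,…,x̂_j,…,x_k)`. -/
def ceD : {k : ℕ} → AlternatingMap ℝ g ℝ (Fin k) → ((Fin (k + 1) → g) → ℝ)
  | 0, _ => 0
  | (k + 1), α => fun x =>
      ∑ i : Fin (k + 2), ∑ j : Fin (k + 2),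
        if hij : (i : ℕ) < (j : ℕ) then
          (-1 : ℝ) ^ ((i : ℕ) + (j : ℕ)) *
            α (fun m : Fin (k + 1) =>
                if hm : (m : ℕ) = 0 then ⁅x i, x j⁆
                else
                  x (j.succAbove
                      ((⟨(i : ℕ), by omega⟩ : Fin (k + 1)).succAbove
                        (⟨(m : ℕ) - 1, by omega⟩ : Fin k))))
        else 0

theorem ceD_zero {k : ℕ} : ceD g (0 : AlternatingMap ℝ g ℝ (Fin k)) = 0 := by
  cases k with
  | zero => rfl
  | succ k => funext x; simp [ceD]

theorem ceD_add {k : ℕ} (α β : AlternatingMap ℝ g ℝ (Fin k)) :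
    ceD g (α + β) = ceD g α + ceD g β := by
  cases k with
  | zero => funext x; simp [ceD]
  | succ k =>
    funext x
    simp only [ceD, Pi.add_apply, AlternatingMap.add_apply]
    rw [← Finset.sum_add_distrib]
    refine Finset.sum_congr rfl fun i _ => ?_
    rw [← Finset.sum_add_distrib]
    refine Finset.sum_congr rfl fun j _ => ?_
    split
    · ring
    · ring

theorem ceD_smul {k : ℕ} (c : ℝ) (α : AlternatingMap ℝ g ℝ (Fin k)) :
    ceD g (c • α) = c • ceD g α := by
  cases k with
  | zero => funext x; simp [ceD]
  | succ k =>
    funext x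
    simp only [ceD, Pi.smul_apply, AlternatingMap.smul_apply, smul_eq_mul,
      Finset.mul_sum]
    refine Finset.sum_congr rfl fun i _ => ?_
    refine Finset.sum_congr rfl fun j _ => ?_
    split
    · ring
    · ring

/-- The space of `d`-closed `k`-forms. -/
def Zsub (k : ℕ) : Submodule ℝ (AlternatingMap ℝ g ℝ (Fin k)) where
  carrier := {α | ceD g α = 0}
  add_mem' := by
    intro a b ha hb
    simp only [Set.mem_setOf_eq] at *
    rw [ceD_add, ha, hb, add_zero]
  zero_mem' := by
    simpa only [Set.mem_setOf_eq] using ceD_zero g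
  smul_mem' := by
    intro c a ha
    simp only [Set.mem_setOf_eq] at *
    rw [ceD_smul, ha, smul_zero]

/-- The space of `d`-exact `k`-forms. -/
def Bsub : (k : ℕ) → Submodule ℝ (AlternatingMap ℝ g ℝ (Fin k))
  | 0 => ⊥
  | (k + 1) =>
    { carrier := {α | ∃ β : AlternatingMap ℝ g ℝ (Fin k), ceD g β = ⇑α}
      add_mem' := by
        rintro a b ⟨βa, hβa⟩ ⟨βb, hβb⟩
        exact ⟨βa + βb, by rw [ceD_add, hβa, hβb]; ext x; simp⟩
      zero_mem' := ⟨0, by rw [ceD_zero]; ext x; simp⟩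
      smul_mem' := by
        rintro c a ⟨β, hβ⟩
        exact ⟨c • β, by rw [ceD_smul, hβ]; rfl⟩ }

/-- The `k`-th Lie algebra cohomology `H^k(g;ℝ) = ker d / im d`. -/
abbrev Hcoh (k : ℕ) : Type _ :=
  @HasQuotient.Quotient ↥(Zsub g k) (Submodule ℝ ↥(Zsub g k)) (@Submodule.hasQuotient ℝ ↥(Zsub g k) _ _ _)
    ((Bsub g k).comap (Zsub g k).subtype)

/-- The cohomology class of a `d`-closed `k`-form. -/
def cls {k : ℕ} (α : AlternatingMap ℝ g ℝ (Fin k)) (hα : ceD g α = 0) : Hcoh g k :=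
  Submodule.Quotient.mk (⟨α, hα⟩ : Zsub g k)

/-- The subgroup `H^{k+}_K(g;ℝ)` of classes admitting a `d`-closed `K`-invariant
representative.  (The set of such classes is a linear subspace, so taking its span
does not enlarge it.) -/
def Hplus (K : g →ₗ[ℝ] g) (k : ℕ) : Submodule ℝ (Hcoh g k) :=
  Submodule.span ℝ
    {c | ∃ (α : AlternatingMap ℝ g ℝ (Fin k)) (hα : ceD g α = 0),
        α.compLinearMap K = α ∧ c = cls g α hα}

/-- The subgroup `H^{k−}_K(g;ℝ)` of classes admitting a `d`-closed
`K`-anti-invariant representative. -/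
def Hminus (K : g →ₗ[ℝ] g) (k : ℕ) : Submodule ℝ (Hcoh g k) :=
  Submodule.span ℝ
    {c | ∃ (α : AlternatingMap ℝ g ℝ (Fin k)) (hα : ceD g α = 0),
        α.compLinearMap K = -α ∧ c = cls g α hα}

/-- The wedge product of `k` linear functionals, as an alternating `k`-form. -/
def wedge {k : ℕ} (fs : Fin k → (g →ₗ[ℝ] ℝ)) :
    AlternatingMap ℝ g ℝ (Fin k) :=
  MultilinearMap.alternatization
    ((MultilinearMap.mkPiAlgebra ℝ (Fin k) ℝ).compLinearMap fs)

end ChevalleyEilenberg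

noncomputable section

section Solv

variable (g : Type*) [LieRing g] [LieAlgebra ℝ g] (e : Module.Basis (Fin 4) ℝ g)

/-- `g⁺_t = span(e_2, e_3)` (0-indexed: `e 1, e 2`), independent of `t`. -/
def gP : Submodule ℝ g := Submodule.span ℝ {e 1, e 2}

/-- `g⁻_t = span(e_1, e_4 + t e_2)` (0-indexed: `e 0, e 3 + t • e 1`). -/
def gM (t : ℝ) : Submodule ℝ g := Submodule.span ℝ {e 0, e 3 + t • e 1}

lemma ceD_one_apply (β : AlternatingMap ℝ g ℝ (Fin 1)) (x : Fin 2 → g) :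
    ceD g β x = -β ![⁅x 0, x 1⁆] := by
  have h0 : ceD g β x = ∑ i : Fin 2, ∑ j : Fin 2,
      (if hij : (i:ℕ) < (j:ℕ) then ((-1:ℝ))^((i:ℕ)+(j:ℕ)) *
        β (fun m : Fin 1 => if hm : (m:ℕ) = 0 then ⁅x i, x j⁆ else
          x (j.succAbove ((⟨(i:ℕ), by omega⟩ : Fin 1).succAbove
            (⟨(m:ℕ)-1, by omega⟩ : Fin 0)))) else 0) := rfl
  rw [h0, Fin.sum_univ_two, Fin.sum_univ_two, Fin.sum_univ_two]
  norm_num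
  congr 1
  funext m
  fin_cases m <;> rfl

lemma ceD_two_apply (α : AlternatingMap ℝ g ℝ (Fin 2)) (x : Fin 3 → g) :
    ceD g α x = -α ![⁅x 0, x 1⁆, x 2] + α ![⁅x 0, x 2⁆, x 1] - α ![⁅x 1, x 2⁆, x 0] := by
  have h0 : ceD g α x = ∑ i : Fin 3, ∑ j : Fin 3,
      (if hij : (i:ℕ) < (j:ℕ) then ((-1:ℝ))^((i:ℕ)+(j:ℕ)) *
        α (fun m : Fin 2 => if hm : (m:ℕ) = 0 then ⁅x i, x j⁆ else
          x (j.succAbove ((⟨(i:ℕ), by omega⟩ : Fin 2).succAbove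
            (⟨(m:ℕ)-1, by omega⟩ : Fin 1)))) else 0) := rfl
  rw [h0]
  rw [Fin.sum_univ_three]
  rw [Fin.sum_univ_three, Fin.sum_univ_three, Fin.sum_univ_three]
  have e01 : (fun m : Fin 2 => if hm : (m:ℕ) = 0 then ⁅x 0, x 1⁆ else
          x ((1:Fin 3).succAbove ((⟨((0:Fin 3):ℕ), by omega⟩ : Fin 2).succAbove
            (⟨(m:ℕ)-1, by omega⟩ : Fin 1)))) = ![⁅x 0, x 1⁆, x 2] := by
    funext m; fin_cases m <;> rfl
  have e02 : (fun m : Fin 2 => if hm : (m:ℕ) = 0 then ⁅x 0, x 2⁆ else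
          x ((2:Fin 3).succAbove ((⟨((0:Fin 3):ℕ), by omega⟩ : Fin 2).succAbove
            (⟨(m:ℕ)-1, by omega⟩ : Fin 1)))) = ![⁅x 0, x 2⁆, x 1] := by
    funext m; fin_cases m <;> rfl
  have e12 : (fun m : Fin 2 => if hm : (m:ℕ) = 0 then ⁅x 1, x 2⁆ else
          x ((2:Fin 3).succAbove ((⟨((1:Fin 3):ℕ), by omega⟩ : Fin 2).succAbove
            (⟨(m:ℕ)-1, by omega⟩ : Fin 1)))) = ![⁅x 1, x 2⁆, x 0] := by
    funext m; fin_cases m <;> rfl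
  simp only [e01, e02, e12]
  norm_num
  ring


lemma wedge_one_apply (f : g →ₗ[ℝ] ℝ) (x : Fin 1 → g) :
    wedge g ![f] x = f (x 0) := by
  simp [wedge, MultilinearMap.alternatization_apply]

lemma wedge_two_apply (f h : g →ₗ[ℝ] ℝ) (x : Fin 2 → g) :
    wedge g ![f, h] x = f (x 0) * h (x 1) - f (x 1) * h (x 0) := by
  have huniv : (Finset.univ : Finset (Equiv.Perm (Fin 2))) = {1, Equiv.swap 0 1} := by decide
  show MultilinearMap.alternatization _ x = _
  rw [MultilinearMap.alternatization_apply, huniv, Finset.sum_pair (by decide)]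
  simp [Equiv.Perm.sign_swap, Fin.prod_univ_two]
  ring


lemma bracket_expand
    (hbr : ∀ i j : Fin 4, i < j → ⁅e i, e j⁆ =
      (if i = 1 ∧ j = 2 then -e 2 else if i = 1 ∧ j = 3 then e 3 else 0))
    (u v : g) :
    ⁅u, v⁆ = (e.repr u 2 * e.repr v 1 - e.repr u 1 * e.repr v 2) • e 2
      + (e.repr u 1 * e.repr v 3 - e.repr u 3 * e.repr v 1) • e 3 := by
  have h01 : ⁅e 0, e 1⁆ = 0 := by simpa using hbr 0 1 (by decide)
  have h02 : ⁅e 0, e 2⁆ = 0 := by simpa using hbr 0 2 (by decide)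
  have h03 : ⁅e 0, e 3⁆ = 0 := by simpa using hbr 0 3 (by decide)
  have h12 : ⁅e 1, e 2⁆ = -e 2 := by simpa using hbr 1 2 (by decide)
  have h13 : ⁅e 1, e 3⁆ = e 3 := by simpa using hbr 1 3 (by decide)
  have h23 : ⁅e 2, e 3⁆ = 0 := by simpa using hbr 2 3 (by decide)
  have h10 : ⁅e 1, e 0⁆ = 0 := by rw [← lie_skew, h01, neg_zero]
  have h20 : ⁅e 2, e 0⁆ = 0 := by rw [← lie_skew, h02, neg_zero]
  have h30 : ⁅e 3, e 0⁆ = 0 := by rw [← lie_skew, h03, neg_zero]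
  have h21 : ⁅e 2, e 1⁆ = e 2 := by rw [← lie_skew, h12, neg_neg]
  have h31 : ⁅e 3, e 1⁆ = -e 3 := by rw [← lie_skew, h13]
  have h32 : ⁅e 3, e 2⁆ = 0 := by rw [← lie_skew, h23, neg_zero]
  conv_lhs => rw [← e.sum_repr u, ← e.sum_repr v]
  rw [Fin.sum_univ_four, Fin.sum_univ_four]
  simp only [add_lie, lie_add, smul_lie, lie_smul, h01, h02, h03, h12, h13, h23,
    h10, h20, h30, h21, h31, h32, lie_self, smul_zero, zero_add, add_zero,
    smul_neg, smul_smul]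
  module

lemma repr_bracket
    (hbr : ∀ i j : Fin 4, i < j → ⁅e i, e j⁆ =
      (if i = 1 ∧ j = 2 then -e 2 else if i = 1 ∧ j = 3 then e 3 else 0))
    (u v : g) (i : Fin 4) :
    e.repr ⁅u, v⁆ i =
      (if (2:Fin 4) = i then e.repr u 2 * e.repr v 1 - e.repr u 1 * e.repr v 2 else 0)
      + (if (3:Fin 4) = i then e.repr u 1 * e.repr v 3 - e.repr u 3 * e.repr v 1 else 0) := by
  rw [bracket_expand g e hbr u v]
  simp [e.repr_self, Finsupp.single_apply]
  split_ifs <;> ring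

section CW
variable (hbr : ∀ i j : Fin 4, i < j → ⁅e i, e j⁆ =
      (if i = 1 ∧ j = 2 then -e 2 else if i = 1 ∧ j = 3 then e 3 else 0))
include hbr

lemma closed01 : ceD g (wedge g ![e.coord 0, e.coord 1]) = 0 := by
  funext x
  rw [ceD_two_apply]
  simp only [wedge_two_apply, Module.Basis.coord_apply, Matrix.cons_val_zero, Matrix.cons_val_one,
    Matrix.head_cons, repr_bracket g e hbr, Pi.zero_apply]
  simp
  try ring

lemma closed12 : ceD g (wedge g ![e.coord 1, e.coord 2]) = 0 := by
  funext x
  rw [ceD_two_apply]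
  simp only [wedge_two_apply, Module.Basis.coord_apply, Matrix.cons_val_zero, Matrix.cons_val_one,
    Matrix.head_cons, repr_bracket g e hbr, Pi.zero_apply]
  simp
  try ring

lemma closed13 : ceD g (wedge g ![e.coord 1, e.coord 3]) = 0 := by
  funext x
  rw [ceD_two_apply]
  simp only [wedge_two_apply, Module.Basis.coord_apply, Matrix.cons_val_zero, Matrix.cons_val_one,
    Matrix.head_cons, repr_bracket g e hbr, Pi.zero_apply]
  simp
  try ring

lemma closed23 : ceD g (wedge g ![e.coord 2, e.coord 3]) = 0 := by
  funext x
  rw [ceD_two_apply]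
  simp only [wedge_two_apply, Module.Basis.coord_apply, Matrix.cons_val_zero, Matrix.cons_val_one,
    Matrix.head_cons, repr_bracket g e hbr, Pi.zero_apply]
  simp
  try ring

end CW

lemma update20 (u v w : g) : Function.update ![u, v] 0 w = ![w, v] := by
  funext m; fin_cases m <;> simp

lemma update21 (u v w : g) : Function.update ![u, v] 1 w = ![u, w] := by
  funext m; fin_cases m <;> simp

lemma update10 (u w : g) : Function.update ![u] 0 w = ![w] := by
  funext m; fin_cases m <;> simp

lemma alt1_comb (β : AlternatingMap ℝ g ℝ (Fin 1)) (a b : ℝ) (u v : g) :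
    β ![a • u + b • v] = a * β ![u] + b * β ![v] := by
  calc β ![a • u + b • v] = β (Function.update ![u] 0 (a • u + b • v)) := by rw [update10]
    _ = a • β (Function.update ![u] 0 u) + b • β (Function.update ![u] 0 v) := by
        rw [AlternatingMap.map_update_add, AlternatingMap.map_update_smul,
          AlternatingMap.map_update_smul]
    _ = a * β ![u] + b * β ![v] := by rw [update10, update10]; simp

lemma alt2_add_left (α : AlternatingMap ℝ g ℝ (Fin 2)) (u u' v : g) :
    α ![u + u', v] = α ![u, v] + α ![u', v] := by
  have h := α.map_update_add (v := ![u, v]) 0 u u'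
  rwa [update20, update20, update20] at h

lemma alt2_add_right (α : AlternatingMap ℝ g ℝ (Fin 2)) (u v v' : g) :
    α ![u, v + v'] = α ![u, v] + α ![u, v'] := by
  have h := α.map_update_add (v := ![u, v]) 1 v v'
  rwa [update21, update21, update21] at h

lemma alt2_smul_left (α : AlternatingMap ℝ g ℝ (Fin 2)) (a : ℝ) (u v : g) :
    α ![a • u, v] = a * α ![u, v] := by
  have h := α.map_update_smul (v := ![u, v]) 0 a u
  rwa [update20, update20] at h

lemma alt2_smul_right (α : AlternatingMap ℝ g ℝ (Fin 2)) (a : ℝ) (u v : g) :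
    α ![u, a • v] = a * α ![u, v] := by
  have h := α.map_update_smul (v := ![u, v]) 1 a v
  rwa [update21, update21] at h

lemma alt2_neg_left (α : AlternatingMap ℝ g ℝ (Fin 2)) (u v : g) :
    α ![-u, v] = -α ![u, v] := by
  have := alt2_smul_left g α (-1) u v
  simpa using this

lemma alt2_neg_right (α : AlternatingMap ℝ g ℝ (Fin 2)) (u v : g) :
    α ![u, -v] = -α ![u, v] := by
  have := alt2_smul_right g α (-1) u v
  simpa using this

lemma alt2_swap (α : AlternatingMap ℝ g ℝ (Fin 2)) (u v : g) :
    α ![v, u] = -α ![u, v] := by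
  have h := α.map_swap (v := ![u, v]) (i := 0) (j := 1) (by decide)
  have : (![u, v] ∘ Equiv.swap (0:Fin 2) 1) = ![v, u] := by
    funext m; fin_cases m <;> rfl
  rwa [this] at h

lemma alt2_self (α : AlternatingMap ℝ g ℝ (Fin 2)) (u : g) :
    α ![u, u] = 0 :=
  α.map_eq_zero_of_eq ![u, u] (by simp) (by decide : (0:Fin 2) ≠ 1)

lemma alt2_decomp (α : AlternatingMap ℝ g ℝ (Fin 2)) :
    α = α ![e 0, e 1] • wedge g ![e.coord 0, e.coord 1]
      + α ![e 0, e 2] • wedge g ![e.coord 0, e.coord 2]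
      + α ![e 0, e 3] • wedge g ![e.coord 0, e.coord 3]
      + α ![e 1, e 2] • wedge g ![e.coord 1, e.coord 2]
      + α ![e 1, e 3] • wedge g ![e.coord 1, e.coord 3]
      + α ![e 2, e 3] • wedge g ![e.coord 2, e.coord 3] := by
  refine e.ext_alternating fun v hv => ?_
  have hv01 : v 0 ≠ v 1 := fun h => by simpa using hv h
  have hfe : (fun i : Fin 2 => e (v i)) = ![e (v 0), e (v 1)] := by
    funext m; fin_cases m <;> rfl
  rw [hfe]
  obtain ⟨a, ha⟩ : ∃ a, a = v 0 := ⟨v 0, rfl⟩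
  obtain ⟨b, hb⟩ : ∃ b, b = v 1 := ⟨v 1, rfl⟩
  have hab : a ≠ b := by rw [ha, hb]; exact hv01
  rw [← ha, ← hb]
  fin_cases a <;> fin_cases b <;>
    first
      | exact absurd rfl hab
      | (simp [wedge_two_apply, Module.Basis.coord_apply, e.repr_self, Finsupp.single_apply]
         <;> try rw [alt2_swap]
         <;> try ring)

lemma mem_Bsub_iff (α : AlternatingMap ℝ g ℝ (Fin 2)) :
    α ∈ Bsub g 2 ↔ ∃ β : AlternatingMap ℝ g ℝ (Fin 1), ceD g β = ⇑α := Iff.rfl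

lemma alt2_zero_left (α : AlternatingMap ℝ g ℝ (Fin 2)) (v : g) : α ![0, v] = 0 :=
  α.map_coord_zero 0 rfl

lemma alt2_zero_right (α : AlternatingMap ℝ g ℝ (Fin 2)) (u : g) : α ![u, 0] = 0 :=
  α.map_coord_zero 1 rfl


section SolvMore
variable (hbr : ∀ i j : Fin 4, i < j → ⁅e i, e j⁆ =
      (if i = 1 ∧ j = 2 then -e 2 else if i = 1 ∧ j = 3 then e 3 else 0))
include hbr

lemma exact12 : ceD g (wedge g ![e.coord 2]) = ⇑(wedge g ![e.coord 1, e.coord 2]) := by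
  funext x
  rw [ceD_one_apply, wedge_one_apply, wedge_two_apply]
  simp only [Matrix.cons_val_zero, Module.Basis.coord_apply, repr_bracket g e hbr]
  simp
  ring

lemma exact13 : ceD g (-wedge g ![e.coord 3]) = ⇑(wedge g ![e.coord 1, e.coord 3]) := by
  funext x
  rw [ceD_one_apply]
  simp only [AlternatingMap.neg_apply, wedge_one_apply, wedge_two_apply,
    Matrix.cons_val_zero, Module.Basis.coord_apply, repr_bracket g e hbr]
  simp
  ring

lemma mem_Bsub12 : wedge g ![e.coord 1, e.coord 2] ∈ Bsub g 2 :=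
  ⟨wedge g ![e.coord 2], exact12 g e hbr⟩

lemma mem_Bsub13 : wedge g ![e.coord 1, e.coord 3] ∈ Bsub g 2 :=
  ⟨-wedge g ![e.coord 3], exact13 g e hbr⟩

lemma closed_eval (α : AlternatingMap ℝ g ℝ (Fin 2)) (hα : ceD g α = 0) :
    α ![e 0, e 2] = 0 ∧ α ![e 0, e 3] = 0 := by
  have h01 : ⁅e 0, e 1⁆ = 0 := by simpa using hbr 0 1 (by decide)
  have h02 : ⁅e 0, e 2⁆ = 0 := by simpa using hbr 0 2 (by decide)
  have h03 : ⁅e 0, e 3⁆ = 0 := by simpa using hbr 0 3 (by decide)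
  have h12 : ⁅e 1, e 2⁆ = -e 2 := by simpa using hbr 1 2 (by decide)
  have h13 : ⁅e 1, e 3⁆ = e 3 := by simpa using hbr 1 3 (by decide)
  have k1 := congrFun hα ![e 0, e 1, e 2]
  have k2 := congrFun hα ![e 0, e 1, e 3]
  rw [ceD_two_apply] at k1 k2
  simp only [Matrix.cons_val_zero, Matrix.cons_val_one, Matrix.head_cons,
    Matrix.cons_val_two, Matrix.tail_cons, h01, h02, h03, h12, h13,
    alt2_zero_left, alt2_zero_right, Pi.zero_apply] at k1 k2
  rw [alt2_neg_left, alt2_swap] at k1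
  constructor
  · linarith
  · rw [alt2_swap] at k2
    linarith

omit hbr in
lemma wedge_basis (i j p q : Fin 4) :
    wedge g ![e.coord i, e.coord j] ![e p, e q] =
      (if p = i then 1 else 0) * (if q = j then 1 else 0)
        - (if q = i then 1 else 0) * (if p = j then 1 else 0) := by
  rw [wedge_two_apply]
  simp [Module.Basis.coord_apply, e.repr_self, Finsupp.single_apply]

omit hbr in
lemma compK_pair (K : g →ₗ[ℝ] g) (α : AlternatingMap ℝ g ℝ (Fin 2)) (u v : g) :
    (α.compLinearMap K) ![u, v] = α ![K u, K v] := by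
  rw [AlternatingMap.compLinearMap_apply]
  congr 1
  funext m; fin_cases m <;> rfl

lemma compK_eval (t : ℝ) (K : g →ₗ[ℝ] g)
    (hK0 : K (e 0) = -e 0) (hK1 : K (e 1) = e 1) (hK2 : K (e 2) = e 2)
    (hK3 : K (e 3) = -e 3 - (2*t) • e 1)
    (α : AlternatingMap ℝ g ℝ (Fin 2)) (hα : ceD g α = 0) :
    (α.compLinearMap K) ![e 0, e 1] = -α ![e 0, e 1] ∧
    (α.compLinearMap K) ![e 0, e 2] = 0 ∧
    (α.compLinearMap K) ![e 0, e 3] = 2*t*α ![e 0, e 1] ∧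
    (α.compLinearMap K) ![e 1, e 2] = α ![e 1, e 2] ∧
    (α.compLinearMap K) ![e 1, e 3] = -α ![e 1, e 3] ∧
    (α.compLinearMap K) ![e 2, e 3] = -α ![e 2, e 3] + 2*t*α ![e 1, e 2] := by
  obtain ⟨hz2, hz3⟩ := closed_eval g e hbr α hα
  refine ⟨?_, ?_, ?_, ?_, ?_, ?_⟩ <;> rw [compK_pair]
  · rw [hK0, hK1, alt2_neg_left]
  · rw [hK0, hK2, alt2_neg_left, hz2, neg_zero]
  · rw [hK0, hK3, alt2_neg_left, sub_eq_add_neg, alt2_add_right, alt2_neg_right,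
      alt2_neg_right, alt2_smul_right, hz3]
    ring
  · rw [hK1, hK2]
  · rw [hK1, hK3, sub_eq_add_neg, alt2_add_right, alt2_neg_right, alt2_neg_right,
      alt2_smul_right, alt2_self]
    ring
  · rw [hK2, hK3, sub_eq_add_neg, alt2_add_right, alt2_neg_right, alt2_neg_right,
      alt2_smul_right, alt2_swap g α (e 1) (e 2)]
    ring

lemma inv_iff (t : ℝ) (K : g →ₗ[ℝ] g)
    (hK0 : K (e 0) = -e 0) (hK1 : K (e 1) = e 1) (hK2 : K (e 2) = e 2)
    (hK3 : K (e 3) = -e 3 - (2*t) • e 1)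
    (α : AlternatingMap ℝ g ℝ (Fin 2)) (hα : ceD g α = 0) :
    α.compLinearMap K = α ↔
      (α ![e 0, e 1] = 0 ∧ α ![e 1, e 3] = 0 ∧ α ![e 2, e 3] = t * α ![e 1, e 2]) := by
  obtain ⟨E01, E02, E03, E12, E13, E23⟩ := compK_eval g e hbr t K hK0 hK1 hK2 hK3 α hα
  constructor
  · intro h
    have h1 := DFunLike.congr_fun h ![e 0, e 1]
    have h2 := DFunLike.congr_fun h ![e 1, e 3]
    have h3 := DFunLike.congr_fun h ![e 2, e 3]
    rw [E01] at h1; rw [E13] at h2; rw [E23] at h3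
    refine ⟨by linarith, by linarith, by linarith⟩
  · rintro ⟨ha, hd, hb⟩
    obtain ⟨hz2, hz3⟩ := closed_eval g e hbr α hα
    rw [alt2_decomp g e (α.compLinearMap K), E01, E02, E03, E12, E13, E23]
    conv_rhs => rw [alt2_decomp g e α]
    rw [ha, hd, hb, hz2, hz3]
    module

lemma anti_iff (t : ℝ) (K : g →ₗ[ℝ] g)
    (hK0 : K (e 0) = -e 0) (hK1 : K (e 1) = e 1) (hK2 : K (e 2) = e 2)
    (hK3 : K (e 3) = -e 3 - (2*t) • e 1)
    (α : AlternatingMap ℝ g ℝ (Fin 2)) (hα : ceD g α = 0) :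
    α.compLinearMap K = -α ↔
      (t * α ![e 0, e 1] = 0 ∧ α ![e 1, e 2] = 0) := by
  obtain ⟨E01, E02, E03, E12, E13, E23⟩ := compK_eval g e hbr t K hK0 hK1 hK2 hK3 α hα
  obtain ⟨hz2, hz3⟩ := closed_eval g e hbr α hα
  constructor
  · intro h
    have h1 := DFunLike.congr_fun h ![e 0, e 3]
    have h2 := DFunLike.congr_fun h ![e 1, e 2]
    rw [E03] at h1; rw [E12] at h2
    simp only [AlternatingMap.neg_apply] at h1 h2
    rw [hz3] at h1
    refine ⟨by linarith, by linarith⟩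
  · rintro ⟨ha, hc⟩
    rw [alt2_decomp g e (α.compLinearMap K), E01, E02, E03, E12, E13, E23]
    have hneg : (-α : AlternatingMap ℝ g ℝ (Fin 2)) =
        -(α ![e 0, e 1] • wedge g ![e.coord 0, e.coord 1]
          + α ![e 0, e 2] • wedge g ![e.coord 0, e.coord 2]
          + α ![e 0, e 3] • wedge g ![e.coord 0, e.coord 3]
          + α ![e 1, e 2] • wedge g ![e.coord 1, e.coord 2]
          + α ![e 1, e 3] • wedge g ![e.coord 1, e.coord 3]
          + α ![e 2, e 3] • wedge g ![e.coord 2, e.coord 3]) := by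
      conv_lhs => rw [alt2_decomp g e α]
    rw [hneg, hc, hz2, hz3]
    have h2t : 2 * t * α ![e 0, e 1] = 0 := by linarith [ha]
    rw [h2t]
    module

omit hbr in
lemma alt1_zero (β : AlternatingMap ℝ g ℝ (Fin 1)) : β ![0] = 0 :=
  β.map_coord_zero 0 rfl

lemma Bsub_eval (α : AlternatingMap ℝ g ℝ (Fin 2)) (h : α ∈ Bsub g 2) :
    α ![e 0, e 1] = 0 ∧ α ![e 2, e 3] = 0 := by
  obtain ⟨β, hβ⟩ := h
  have h01 : ⁅e 0, e 1⁆ = 0 := by simpa using hbr 0 1 (by decide)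
  have h23 : ⁅e 2, e 3⁆ = 0 := by simpa using hbr 2 3 (by decide)
  have k1 := congrFun hβ ![e 0, e 1]
  have k2 := congrFun hβ ![e 2, e 3]
  rw [ceD_one_apply] at k1 k2
  simp only [Matrix.cons_val_zero, Matrix.cons_val_one, Matrix.head_cons] at k1 k2
  rw [h01] at k1; rw [h23] at k2
  have k1' : α ![e 0, e 1] = 0 := by rw [← k1, alt1_zero g, neg_zero]
  have k2' : α ![e 2, e 3] = 0 := by rw [← k2, alt1_zero g, neg_zero]
  exact ⟨k1', k2'⟩

lemma quot_decomp (α : AlternatingMap ℝ g ℝ (Fin 2)) (hα : ceD g α = 0) :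
    cls g α hα = α ![e 0, e 1] • cls g (wedge g ![e.coord 0, e.coord 1]) (closed01 g e hbr)
      + α ![e 2, e 3] • cls g (wedge g ![e.coord 2, e.coord 3]) (closed23 g e hbr) := by
  unfold cls
  rw [← Submodule.Quotient.mk_smul, ← Submodule.Quotient.mk_smul, ← Submodule.Quotient.mk_add,
    Submodule.Quotient.eq, Submodule.mem_comap]
  have hcoe : (Zsub g 2).subtype
      ((⟨α, hα⟩ : Zsub g 2)
        - (α ![e 0, e 1] • ⟨wedge g ![e.coord 0, e.coord 1], closed01 g e hbr⟩
          + α ![e 2, e 3] • ⟨wedge g ![e.coord 2, e.coord 3], closed23 g e hbr⟩))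
      = α - (α ![e 0, e 1] • wedge g ![e.coord 0, e.coord 1]
          + α ![e 2, e 3] • wedge g ![e.coord 2, e.coord 3]) := rfl
  rw [hcoe]
  obtain ⟨hz2, hz3⟩ := closed_eval g e hbr α hα
  have E : α - (α ![e 0, e 1] • wedge g ![e.coord 0, e.coord 1]
          + α ![e 2, e 3] • wedge g ![e.coord 2, e.coord 3])
      = α ![e 1, e 2] • wedge g ![e.coord 1, e.coord 2]
        + α ![e 1, e 3] • wedge g ![e.coord 1, e.coord 3] := by
    rw [sub_eq_iff_eq_add]
    conv_lhs => rw [alt2_decomp g e α]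
    rw [hz2, hz3]
    module
  rw [E]
  exact add_mem (Submodule.smul_mem _ _ (mem_Bsub12 g e hbr))
    (Submodule.smul_mem _ _ (mem_Bsub13 g e hbr))

lemma quot_indep (a b : ℝ)
    (h : a • cls g (wedge g ![e.coord 0, e.coord 1]) (closed01 g e hbr)
      + b • cls g (wedge g ![e.coord 2, e.coord 3]) (closed23 g e hbr) = 0) :
    a = 0 ∧ b = 0 := by
  unfold cls at h
  rw [← Submodule.Quotient.mk_smul, ← Submodule.Quotient.mk_smul, ← Submodule.Quotient.mk_add,
    Submodule.Quotient.mk_eq_zero, Submodule.mem_comap] at h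
  have hcoe : (Zsub g 2).subtype
      (a • (⟨wedge g ![e.coord 0, e.coord 1], closed01 g e hbr⟩ : Zsub g 2)
        + b • ⟨wedge g ![e.coord 2, e.coord 3], closed23 g e hbr⟩)
      = a • wedge g ![e.coord 0, e.coord 1] + b • wedge g ![e.coord 2, e.coord 3] := rfl
  rw [hcoe] at h
  obtain ⟨k1, k2⟩ := Bsub_eval g e hbr _ h
  simp only [AlternatingMap.add_apply, AlternatingMap.smul_apply, wedge_basis g e,
    smul_eq_mul] at k1 k2
  simp at k1 k2
  exact ⟨k1, k2⟩


end SolvMore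

lemma K_vals (t : ℝ) (K : g →ₗ[ℝ] g)
    (hKp : ∀ x ∈ gP g e, K x = x) (hKm : ∀ x ∈ gM g e t, K x = -x) :
    K (e 0) = -e 0 ∧ K (e 1) = e 1 ∧ K (e 2) = e 2 ∧ K (e 3) = -e 3 - (2*t) • e 1 := by
  have h1 : K (e 1) = e 1 := hKp _ (Submodule.subset_span (by simp))
  have h2 : K (e 2) = e 2 := hKp _ (Submodule.subset_span (by simp))
  have h0 : K (e 0) = -e 0 := hKm _ (Submodule.subset_span (by simp))
  have h34 : K (e 3 + t • e 1) = -(e 3 + t • e 1) := hKm _ (Submodule.subset_span (by simp))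
  refine ⟨h0, h1, h2, ?_⟩
  have hlin : K (e 3 + t • e 1) = K (e 3) + t • K (e 1) := by rw [map_add, map_smul]
  rw [hlin, h1] at h34
  rw [eq_sub_of_add_eq h34]
  module

/-- On the 4-dimensional solvable Lie algebra with
`[e_2,e_3] = −e_3`, `[e_2,e_4] = e_4`, one has `dim H^2(g;ℝ) = 2` (with basis
`[e^1∧e^2]`, `[e^3∧e^4]`), `dim H^{2+}_{K_0} = 0`, `dim H^{2−}_{K_0} = 2`, while
for `t ≠ 0`, `dim H^{2+}_{K_t} = 1 = dim H^{2−}_{K_t}`. -/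
theorem solvable_deformation_jump_of_dimensions
    (hbr : ∀ i j : Fin 4, i < j → ⁅e i, e j⁆ =
      (if i = 1 ∧ j = 2 then -e 2 else if i = 1 ∧ j = 3 then e 3 else 0)) :
    Module.finrank ℝ (Hcoh g 2) = 2 ∧
    (∃ (h12 : ceD g (wedge g ![e.coord 0, e.coord 1]) = 0)
       (h34 : ceD g (wedge g ![e.coord 2, e.coord 3]) = 0),
      LinearIndependent ℝ
        ![cls g (wedge g ![e.coord 0, e.coord 1]) h12,
          cls g (wedge g ![e.coord 2, e.coord 3]) h34] ∧
      Submodule.span ℝ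
        {cls g (wedge g ![e.coord 0, e.coord 1]) h12,
         cls g (wedge g ![e.coord 2, e.coord 3]) h34} =
        (⊤ : Submodule ℝ (Hcoh g 2))) ∧
    (∀ K : g →ₗ[ℝ] g, (∀ x ∈ gP g e, K x = x) → (∀ x ∈ gM g e 0, K x = -x) →
      Module.finrank ℝ (Hplus g K 2) = 0 ∧
      Module.finrank ℝ (Hminus g K 2) = 2) ∧
    (∀ t : ℝ, t ≠ 0 → ∀ K : g →ₗ[ℝ] g,
      (∀ x ∈ gP g e, K x = x) → (∀ x ∈ gM g e t, K x = -x) →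
      Module.finrank ℝ (Hplus g K 2) = 1 ∧
      Module.finrank ℝ (Hminus g K 2) = 1) := by
  have h01 := closed01 g e hbr
  have h23 := closed23 g e hbr
  set c1 : Hcoh g 2 := cls g (wedge g ![e.coord 0, e.coord 1]) h01 with hc1
  set c2 : Hcoh g 2 := cls g (wedge g ![e.coord 2, e.coord 3]) h23 with hc2
  -- spanning
  have hspan : Submodule.span ℝ {c1, c2} = ⊤ := by
    rw [Submodule.eq_top_iff']
    intro x
    obtain ⟨z, rfl⟩ := Submodule.Quotient.mk_surjective _ x
    obtain ⟨α, hα⟩ := z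
    have hx : (Submodule.Quotient.mk (⟨α, hα⟩ : Zsub g 2) : Hcoh g 2) = cls g α hα := rfl
    rw [hx, quot_decomp g e hbr α hα]
    exact add_mem
      (Submodule.smul_mem _ _ (Submodule.subset_span (Or.inl rfl)))
      (Submodule.smul_mem _ _ (Submodule.subset_span (Or.inr rfl)))
  -- independence
  have hli : LinearIndependent ℝ ![c1, c2] := by
    rw [linearIndependent_fin2]
    simp only [Matrix.cons_val_one, Matrix.head_cons, Matrix.cons_val_zero]
    constructor
    · intro hc
      exact one_ne_zero (quot_indep g e hbr 0 1 (by simpa using hc)).2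
    · intro a ha
      refine one_ne_zero (quot_indep g e hbr 1 (-a) ?_).1
      show (1:ℝ) • c1 + (-a) • c2 = 0
      rw [one_smul, neg_smul, ← ha]
      abel
  have hc2ne : c2 ≠ 0 := fun hc =>
    one_ne_zero (quot_indep g e hbr 0 1 (by simpa using hc)).2
  -- finrank of H²
  have hr : Set.range ![c1, c2] = {c1, c2} := by
    ext y; simp [Fin.exists_fin_two]; tauto
  have hb : Module.Basis (Fin 2) ℝ (Hcoh g 2) := Module.Basis.mk hli (by rw [hr, hspan])
  have hfr : Module.finrank ℝ (Hcoh g 2) = 2 := by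
    rw [Module.finrank_eq_card_basis hb]; simp
  refine ⟨hfr, ⟨h01, h23, hli, hspan⟩, ?_, ?_⟩
  · -- t = 0
    intro K hKp hKm
    obtain ⟨hK0, hK1, hK2, hK3⟩ := K_vals g e 0 K hKp hKm
    constructor
    · have hsub : Hplus g K 2 ≤ ⊥ := by
        refine Submodule.span_le.2 ?_
        rintro x ⟨α, hα, hinv, rfl⟩
        obtain ⟨ha, hd, hbb⟩ := (inv_iff g e hbr 0 K hK0 hK1 hK2 hK3 α hα).1 hinv
        have hz : cls g α hα = 0 := by
          rw [quot_decomp g e hbr α hα, ha, hbb]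
          simp
        simp [hz]
      rw [le_bot_iff.1 hsub]
      exact finrank_bot ℝ _
    · have hsup : ⊤ ≤ Hminus g K 2 := by
        rw [← hspan, Submodule.span_le]
        intro x hx
        rcases hx with rfl | rfl
        · exact Submodule.subset_span ⟨wedge g ![e.coord 0, e.coord 1], h01,
            (anti_iff g e hbr 0 K hK0 hK1 hK2 hK3 _ h01).2
              (by simp [wedge_basis g e]), rfl⟩
        · exact Submodule.subset_span ⟨wedge g ![e.coord 2, e.coord 3], h23,
            (anti_iff g e hbr 0 K hK0 hK1 hK2 hK3 _ h23).2
              (by simp [wedge_basis g e]), rfl⟩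
      rw [top_le_iff.1 hsup, finrank_top]
      exact hfr
  · -- t ≠ 0
    intro t ht K hKp hKm
    obtain ⟨hK0, hK1, hK2, hK3⟩ := K_vals g e t K hKp hKm
    constructor
    · -- Hplus = span {c2}
      have hle : Hplus g K 2 ≤ Submodule.span ℝ {c2} := by
        refine Submodule.span_le.2 ?_
        rintro x ⟨α, hα, hinv, rfl⟩
        obtain ⟨ha, hd, hbb⟩ := (inv_iff g e hbr t K hK0 hK1 hK2 hK3 α hα).1 hinv
        rw [SetLike.mem_coe, quot_decomp g e hbr α hα, ha, zero_smul, zero_add]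
        exact Submodule.smul_mem _ _ (Submodule.subset_span rfl)
      have hge : Submodule.span ℝ {c2} ≤ Hplus g K 2 := by
        rw [Submodule.span_le, Set.singleton_subset_iff]
        have hα₀ : ceD g (wedge g ![e.coord 1, e.coord 2]
            + t • wedge g ![e.coord 2, e.coord 3]) = 0 := by
          rw [ceD_add, ceD_smul, closed12 g e hbr, closed23 g e hbr]
          simp
        have hinv : (wedge g ![e.coord 1, e.coord 2]
            + t • wedge g ![e.coord 2, e.coord 3]).compLinearMap K = _ :=
          (inv_iff g e hbr t K hK0 hK1 hK2 hK3 _ hα₀).2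
            (by simp [wedge_basis g e])
        have hmem : cls g _ hα₀ ∈ Hplus g K 2 :=
          Submodule.subset_span ⟨_, hα₀, hinv, rfl⟩
        have hcls : cls g _ hα₀ = t • c2 := by
          rw [quot_decomp g e hbr _ hα₀]
          simp [wedge_basis g e, hc2]
        have hc2eq : c2 = t⁻¹ • (t • c2) := by
          rw [smul_smul, inv_mul_cancel₀ ht, one_smul]
        rw [hc2eq, ← hcls]
        exact Submodule.smul_mem _ _ hmem
      rw [le_antisymm hle hge]
      exact finrank_span_singleton hc2ne
    · -- Hminus = span {c2}
      have hle : Hminus g K 2 ≤ Submodule.span ℝ {c2} := by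
        refine Submodule.span_le.2 ?_
        rintro x ⟨α, hα, hanti, rfl⟩
        obtain ⟨hta, hc⟩ := (anti_iff g e hbr t K hK0 hK1 hK2 hK3 α hα).1 hanti
        have ha : α ![e 0, e 1] = 0 := (mul_eq_zero.1 hta).resolve_left ht
        rw [SetLike.mem_coe, quot_decomp g e hbr α hα, ha, zero_smul, zero_add]
        exact Submodule.smul_mem _ _ (Submodule.subset_span rfl)
      have hge : Submodule.span ℝ {c2} ≤ Hminus g K 2 := by
        rw [Submodule.span_le, Set.singleton_subset_iff]
        exact Submodule.subset_span ⟨wedge g ![e.coord 2, e.coord 3], h23,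
          (anti_iff g e hbr t K hK0 hK1 hK2 hK3 _ h23).2
            (by simp [wedge_basis g e]), rfl⟩
      rw [le_antisymm hle hge]
      exact finrank_span_singleton hc2ne


end Solv

end
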